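/- For all integers n ≥ 1 and m ≥ 3, the connected size Ramsey number r̂_c(nK₂, Pₘ) is at most n(m+2)/2 − 1 if n is even, and at most (n+1)(m+2)/2 − 3 if n is odd. -/

import Mathlib

open SimpleGraph

/-- `G` contains a copy of `H`, i.e. there is an injective graph homomorphism from `H` to `G`. -/
def ContainsCopy {V W : Type*} (G : SimpleGraph V) (H : SimpleGraph W) : Prop :=
  ∃ f : H →g G, Function.Injective f

/-- `G` arrows `(G₁, G₂)`: for every red/blue colouring of the edges of `G`
(given by a subgraph `R ≤ G` of red edges, the blue edges being `G \ R`),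
there is a red copy of `G₁` or a blue copy of `G₂`. -/
def Arrows {V V₁ V₂ : Type*} (G : SimpleGraph V) (G₁ : SimpleGraph V₁) (G₂ : SimpleGraph V₂) :
    Prop :=
  ∀ R : SimpleGraph V, R ≤ G → ContainsCopy R G₁ ∨ ContainsCopy (G \ R) G₂

/-- The matching `nK₂` with `n` edges. -/
def Matching (n : ℕ) : SimpleGraph (Fin n × Fin 2) where
  Adj a b := a.1 = b.1 ∧ a.2 ≠ b.2
  symm := ⟨by intro a b h; exact ⟨h.1.symm, h.2.symm⟩⟩
  loopless := ⟨by intro a h; exact h.2 rfl⟩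

/-- `n` disjoint copies of the graph `H`. -/
def Copies (n : ℕ) {W : Type*} (H : SimpleGraph W) : SimpleGraph (Fin n × W) where
  Adj a b := a.1 = b.1 ∧ H.Adj a.2 b.2
  symm := ⟨by intro a b h; exact ⟨h.1.symm, h.2.symm⟩⟩
  loopless := ⟨by intro a h; exact H.loopless.irrefl _ h.2⟩

/-- Disjoint union of two graphs. -/
def DisjUnion {V W : Type*} (G : SimpleGraph V) (H : SimpleGraph W) : SimpleGraph (V ⊕ W) where
  Adj a b :=
    match a, b with
    | Sum.inl x, Sum.inl y => G.Adj x y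
    | Sum.inr x, Sum.inr y => H.Adj x y
    | _, _ => False
  symm := ⟨by
    rintro (x | x) (y | y) h
    · exact G.symm.symm _ _ h
    · exact h.elim
    · exact h.elim
    · exact H.symm.symm _ _ h⟩
  loopless := ⟨by
    rintro (x | x) h
    · exact G.loopless.irrefl _ h
    · exact H.loopless.irrefl _ h⟩

/-! ### Auxiliary constructions -/

/-- The cycle on `ZMod N`. -/
def Cyc (N : ℕ) : SimpleGraph (ZMod N) where
  Adj x y := x ≠ y ∧ (y = x + 1 ∨ x = y + 1)
  symm := ⟨by intro x y h; exact ⟨h.1.symm, h.2.symm⟩⟩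
  loopless := ⟨by intro x h; exact h.1 rfl⟩

lemma zmod_small_ne (m : ℕ) (hm : 3 ≤ m) (c : ℕ) (h1 : 1 ≤ c) (h2 : c ≤ 3) :
    (c : ZMod (m+1)) ≠ 0 := by
  intro h
  rw [ZMod.natCast_eq_zero_iff] at h
  have := Nat.le_of_dvd (by omega) h
  omega

lemma cyc_dichotomy (m : ℕ) (hm : 3 ≤ m) (Red : ZMod (m+1) → ZMod (m+1) → Prop)
    (hsymm : ∀ x y, Red x y → Red y x)
    (hsub : ∀ x y, Red x y → (Cyc (m+1)).Adj x y) :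
    (∃ a b c d, Red a b ∧ Red c d ∧ a ≠ b ∧ c ≠ d ∧ a ≠ c ∧ a ≠ d ∧ b ≠ c ∧ b ≠ d) ∨
    (∃ c : ZMod (m+1), ∀ x y, Red x y → x = c ∨ y = c) := by
  have h1 : (1 : ZMod (m+1)) ≠ 0 := by
    have := zmod_small_ne m hm 1 (by norm_num) (by norm_num); simpa using this
  have h2 : (2 : ZMod (m+1)) ≠ 0 := by
    have := zmod_small_ne m hm 2 (by norm_num) (by norm_num)
    rwa [Nat.cast_ofNat] at this
  have h3 : (3 : ZMod (m+1)) ≠ 0 := by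
    have := zmod_small_ne m hm 3 (by norm_num) (by norm_num)
    rwa [Nat.cast_ofNat] at this
  have e1 : ∀ a : ZMod (m+1), a ≠ a + 1 := fun a h => h1 (by linear_combination -h)
  have e2 : ∀ a : ZMod (m+1), a ≠ a + 2 := fun a h => h2 (by linear_combination -h)
  have e3 : ∀ a : ZMod (m+1), a ≠ a + 3 := fun a h => h3 (by linear_combination -h)
  have key : ∀ x : ZMod (m+1), Red x (x+1) →
      (∃ a b c d, Red a b ∧ Red c d ∧ a ≠ b ∧ c ≠ d ∧ a ≠ c ∧ a ≠ d ∧ b ≠ c ∧ b ≠ d) ∨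
      (∃ c : ZMod (m+1), ∀ u v, Red u v → u = c ∨ v = c) := by
    intro x hx
    have hxx1 : x ≠ x + 1 := e1 x
    by_cases hX : ∀ u v, Red u v → u = x ∨ v = x
    · exact Or.inr ⟨x, hX⟩
    push_neg at hX
    obtain ⟨u, v, huv, hu, hv⟩ := hX
    have hadj := hsub u v huv
    have huvne : u ≠ v := hadj.1
    by_cases hu1 : u = x + 1 ∨ v = x + 1
    · have hA : Red (x+1) (x+2) := by
        rcases hu1 with h | h
        · subst h
          rcases hadj.2 with h' | h'
          · have hv2 : v = x + 2 := by rw [h']; ring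
            rwa [hv2] at huv
          · exact absurd (add_right_cancel h').symm hv
        · subst h
          rcases hadj.2 with h' | h'
          · exact absurd (add_right_cancel h'.symm) hu
          · have hu2 : u = x + 2 := by rw [h']; ring
            rw [hu2] at huv; exact hsymm _ _ huv
      by_cases hY : ∀ u v, Red u v → u = x + 1 ∨ v = x + 1
      · exact Or.inr ⟨x+1, hY⟩
      push_neg at hY
      obtain ⟨p, q, hpq, hp, hq⟩ := hY
      have hadj' := hsub p q hpq
      have hpqne : p ≠ q := hadj'.1
      by_cases hp1 : p = x ∨ q = x
      · have hB : ∃ w, Red x w ∧ w + 1 = x := by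
          rcases hp1 with h | h
          · subst h
            rcases hadj'.2 with h' | h'
            · exact absurd h' hq
            · exact ⟨q, hpq, h'.symm⟩
          · subst h
            rcases hadj'.2 with h' | h'
            · exact ⟨p, hsymm _ _ hpq, h'.symm⟩
            · exact absurd h' hp
        obtain ⟨w, hw, hwx⟩ := hB
        refine Or.inl ⟨x+1, x+2, x, w, hA, hw, ?_, ?_, ?_, ?_, ?_, ?_⟩
        · exact fun h => e1 (x+1) (by linear_combination h)
        · exact fun h => e1 w (by linear_combination -h - hwx)
        · exact fun h => e1 x (by linear_combination -h)
        · exact fun h => e2 w (by linear_combination -h - hwx)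
        · exact fun h => e2 x (by linear_combination -h)
        · exact fun h => e3 w (by linear_combination -h - hwx)
      · push_neg at hp1
        exact Or.inl ⟨x, x+1, p, q, hx, hpq, hxx1, hpqne, Ne.symm hp1.1, Ne.symm hp1.2,
          Ne.symm hp, Ne.symm hq⟩
    · push_neg at hu1
      exact Or.inl ⟨x, x+1, u, v, hx, huv, hxx1, huvne, Ne.symm hu, Ne.symm hv,
        Ne.symm hu1.1, Ne.symm hu1.2⟩
  by_cases hE : ∀ u v, Red u v → u = 0 ∨ v = 0
  · exact Or.inr ⟨0, hE⟩
  push_neg at hE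
  obtain ⟨u, v, huv, -, -⟩ := hE
  rcases (hsub u v huv).2 with h | h
  · rw [h] at huv; exact key u huv
  · rw [h] at huv; exact key v (hsymm _ _ huv)

lemma path_in_cycle (m : ℕ) (hm : 3 ≤ m) (c : ZMod (m+1)) :
    ∃ f : Fin m → ZMod (m+1), Function.Injective f ∧ (∀ i, f i ≠ c) ∧
      ∀ u v : Fin m, (pathGraph m).Adj u v → (Cyc (m+1)).Adj (f u) (f v) := by
  refine ⟨fun i => c + 1 + (i.val : ZMod (m+1)), ?_, ?_, ?_⟩
  · intro i j h
    have h' : ((i.val : ℕ) : ZMod (m+1)) = ((j.val : ℕ) : ZMod (m+1)) := add_left_cancel h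
    have := congrArg ZMod.val h'
    rw [ZMod.val_cast_of_lt (by omega), ZMod.val_cast_of_lt (by omega)] at this
    exact Fin.ext this
  · intro i h
    have h' : (((i.val + 1 : ℕ)) : ZMod (m+1)) = 0 := by
      push_cast
      linear_combination h
    rw [ZMod.natCast_eq_zero_iff] at h'
    have := Nat.le_of_dvd (by omega) h'
    omega
  · intro u v h
    rw [pathGraph_adj] at h
    have hne : u.val ≠ v.val := by omega
    constructor
    · intro hh
      have h' : ((u.val : ℕ) : ZMod (m+1)) = ((v.val : ℕ) : ZMod (m+1)) := add_left_cancel hh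
      have := congrArg ZMod.val h'
      rw [ZMod.val_cast_of_lt (by omega), ZMod.val_cast_of_lt (by omega)] at this
      exact hne this
    · rcases h with h | h
      · left
        have h2 : ((v.val : ℕ) : ZMod (m+1)) = ((u.val : ℕ) : ZMod (m+1)) + 1 := by
          rw [← h]; push_cast; ring
        show c + 1 + (v.val : ZMod (m+1)) = c + 1 + (u.val : ZMod (m+1)) + 1
        linear_combination h2
      · right
        have h2 : ((u.val : ℕ) : ZMod (m+1)) = ((v.val : ℕ) : ZMod (m+1)) + 1 := by
          rw [← h]; push_cast; ring
        show c + 1 + (u.val : ZMod (m+1)) = c + 1 + (v.val : ZMod (m+1)) + 1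
        linear_combination h2

lemma matching_hom {V : Type} (R : SimpleGraph V) (n : ℕ) (x y : Fin n → V)
    (hadj : ∀ i, R.Adj (x i) (y i))
    (hdisj : ∀ i j, i ≠ j → x i ≠ x j ∧ x i ≠ y j ∧ y i ≠ x j ∧ y i ≠ y j) :
    ContainsCopy R (Matching n) := by
  refine ⟨⟨fun p => if p.2 = 0 then x p.1 else y p.1, ?_⟩, ?_⟩
  · rintro ⟨i, s⟩ ⟨j, t⟩ ⟨h1, h2⟩
    simp only at h1
    subst h1
    fin_cases s <;> fin_cases t <;> simp_all
    exact (hadj i).symm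
  · intro p q h
    have h' : (if p.2 = 0 then x p.1 else y p.1) = (if q.2 = 0 then x q.1 else y q.1) := h
    clear h
    obtain ⟨i, s⟩ := p
    obtain ⟨j, t⟩ := q
    by_cases hij : i = j
    · subst hij
      fin_cases s <;> fin_cases t <;> simp_all
      · exact absurd h' (hadj i).ne
      · exact absurd h'.symm (hadj i).ne
    · exfalso
      obtain ⟨d1, d2, d3, d4⟩ := hdisj i j hij
      fin_cases s <;> fin_cases t <;> simp_all

/-- `k` cycles `C_{m+1}` joined in a chain by bridge edges between the `0` vertices. -/
def EvenG (k m : ℕ) : SimpleGraph (Fin k × ZMod (m+1)) where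
  Adj a b := (a.1 = b.1 ∧ (Cyc (m+1)).Adj a.2 b.2) ∨
    (a.2 = 0 ∧ b.2 = 0 ∧ (a.1.val + 1 = b.1.val ∨ b.1.val + 1 = a.1.val))
  symm := ⟨by
    rintro a b (⟨h1, h2⟩ | ⟨h1, h2, h3⟩)
    · exact Or.inl ⟨h1.symm, h2.symm⟩
    · exact Or.inr ⟨h2, h1, h3.symm⟩⟩
  loopless := ⟨by
    rintro a (⟨-, h⟩ | ⟨-, -, h⟩)
    · exact (Cyc _).loopless.irrefl _ h
    · omega⟩

/-- `k` cycles joined in a chain, with a path `P_m` attached to the last cycle. -/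
def OddG (k m : ℕ) : SimpleGraph ((Fin k × ZMod (m+1)) ⊕ Fin m) where
  Adj a b :=
    (∃ x y, a = Sum.inl x ∧ b = Sum.inl y ∧ (EvenG k m).Adj x y) ∨
    (∃ p q, a = Sum.inr p ∧ b = Sum.inr q ∧ (pathGraph m).Adj p q) ∨
    (∃ x p, ((a = Sum.inl x ∧ b = Sum.inr p) ∨ (a = Sum.inr p ∧ b = Sum.inl x)) ∧
      x.1.val + 1 = k ∧ x.2 = 0 ∧ p.val = 0)
  symm := ⟨by
    rintro a b (⟨x, y, h1, h2, h3⟩ | ⟨p, q, h1, h2, h3⟩ | ⟨x, p, h1, h2⟩)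
    · exact Or.inl ⟨y, x, h2, h1, h3.symm⟩
    · exact Or.inr (Or.inl ⟨q, p, h2, h1, h3.symm⟩)
    · refine Or.inr (Or.inr ⟨x, p, ?_, h2⟩)
      rcases h1 with ⟨ha, hb⟩ | ⟨ha, hb⟩
      · exact Or.inr ⟨hb, ha⟩
      · exact Or.inl ⟨hb, ha⟩⟩
  loopless := ⟨by
    rintro a (⟨x, y, h1, h2, h3⟩ | ⟨p, q, h1, h2, h3⟩ | ⟨x, p, (⟨h1, h2⟩ | ⟨h1, h2⟩), h3⟩)
    · rw [h1] at h2; injection h2 with h2; rw [h2] at h3; exact (EvenG k m).loopless.irrefl _ h3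
    · rw [h1] at h2; injection h2 with h2; rw [h2] at h3; exact (pathGraph m).loopless.irrefl _ h3
    · rw [h1] at h2; exact Sum.inl_ne_inr h2
    · rw [h1] at h2; exact Sum.inr_ne_inl h2⟩

lemma oddG_inl_inl {k m : ℕ} {a b : Fin k × ZMod (m+1)} :
    (OddG k m).Adj (.inl a) (.inl b) ↔ (EvenG k m).Adj a b := by
  constructor
  · rintro (⟨x, y, h1, h2, h3⟩ | ⟨p, q, h1, h2, h3⟩ | ⟨x, p, (⟨h1, h2⟩ | ⟨h1, h2⟩), h3⟩) <;>
      simp_all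
  · intro h; exact Or.inl ⟨a, b, rfl, rfl, h⟩

lemma oddG_inr_inr {k m : ℕ} {p q : Fin m} :
    (OddG k m).Adj (.inr p) (.inr q) ↔ (pathGraph m).Adj p q := by
  constructor
  · rintro (⟨x, y, h1, h2, h3⟩ | ⟨p', q', h1, h2, h3⟩ | ⟨x, p', (⟨h1, h2⟩ | ⟨h1, h2⟩), h3⟩) <;>
      simp_all
  · intro h; exact Or.inr (Or.inl ⟨p, q, rfl, rfl, h⟩)

lemma oddG_inl_inr {k m : ℕ} {a : Fin k × ZMod (m+1)} {p : Fin m} :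
    (OddG k m).Adj (.inl a) (.inr p) ↔ a.1.val + 1 = k ∧ a.2 = 0 ∧ p.val = 0 := by
  constructor
  · rintro (⟨x, y, h1, h2, h3⟩ | ⟨p', q', h1, h2, h3⟩ | ⟨x, p', (⟨h1, h2⟩ | ⟨h1, h2⟩), h3⟩) <;>
      simp_all
  · intro h; exact Or.inr (Or.inr ⟨a, p, Or.inl ⟨rfl, rfl⟩, h⟩)

lemma cyc_reach_zero (m : ℕ) (hm : 3 ≤ m) (x : ZMod (m+1)) :
    (Cyc (m+1)).Reachable 0 x := by
  have h1 : (1 : ZMod (m+1)) ≠ 0 := by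
    have := zmod_small_ne m hm 1 (by norm_num) (by norm_num); simpa using this
  have key : ∀ j : ℕ, (Cyc (m+1)).Reachable 0 (j : ZMod (m+1)) := by
    intro j
    induction j with
    | zero => simpa using Reachable.refl (0 : ZMod (m+1))
    | succ j ih =>
      refine ih.trans (Adj.reachable ?_)
      refine ⟨fun h => h1 (by push_cast at h ⊢; linear_combination -h), Or.inl (by push_cast; ring)⟩
  have := key x.val
  rwa [ZMod.natCast_zmod_val] at this

lemma evenG_cycle_reach (k m : ℕ) (hm : 3 ≤ m) (i : Fin k) (x : ZMod (m+1)) :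
    (EvenG k m).Reachable (i, x) (i, 0) :=
  ((cyc_reach_zero m hm x).map
    (⟨fun z => (i, z), fun h => Or.inl ⟨rfl, h⟩⟩ : Cyc (m+1) →g EvenG k m)).symm

lemma evenG_chain_reach (k m : ℕ) (h0 : 0 < k) :
    ∀ t (ht : t < k), (EvenG k m).Reachable (⟨t, ht⟩, 0) (⟨0, h0⟩, 0) := by
  intro t
  induction t with
  | zero => intro ht; exact Reachable.refl _
  | succ t ih =>
    intro ht
    have hadj : (EvenG k m).Adj (⟨t+1, ht⟩, 0) (⟨t, by omega⟩, 0) :=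
      Or.inr ⟨rfl, rfl, Or.inr rfl⟩
    exact hadj.reachable.trans (ih (by omega))

lemma evenG_connected (k m : ℕ) (hk : 1 ≤ k) (hm : 3 ≤ m) : (EvenG k m).Connected := by
  have h0 : (0:ℕ) < k := hk
  rw [connected_iff]
  refine ⟨?_, ⟨(⟨0, h0⟩, 0)⟩⟩
  intro u v
  have base : ∀ w : Fin k × ZMod (m+1), (EvenG k m).Reachable w (⟨0, h0⟩, 0) := by
    intro ⟨i, x⟩
    exact (evenG_cycle_reach k m hm i x).trans (evenG_chain_reach k m h0 i.val i.isLt)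
  exact (base u).trans (base v).symm

lemma oddG_connected (k m : ℕ) (hm : 3 ≤ m) : (OddG k m).Connected := by
  have hm0 : (0:ℕ) < m := by omega
  rw [connected_iff]
  refine ⟨?_, ⟨.inr ⟨0, hm0⟩⟩⟩
  have base : ∀ v, (OddG k m).Reachable v (.inr ⟨0, hm0⟩) := by
    intro v
    match v with
    | .inr p =>
      exact Reachable.map
        (⟨fun q => .inr q, fun h => oddG_inr_inr.mpr h⟩ : pathGraph m →g OddG k m)
        (pathGraph_preconnected m p ⟨0, hm0⟩)
    | .inl (i, x) =>
      have hkpos : 0 < k := i.pos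
      have step1 : (OddG k m).Reachable (.inl (i, x)) (.inl (⟨k-1, by omega⟩, 0)) := by
        have r1 : (EvenG k m).Reachable (i, x) (⟨0, hkpos⟩, 0) :=
          (evenG_cycle_reach k m hm i x).trans (evenG_chain_reach k m hkpos i.val i.isLt)
        have r2 : (EvenG k m).Reachable (⟨k-1, by omega⟩, 0) (⟨0, hkpos⟩, 0) :=
          evenG_chain_reach k m hkpos (k-1) (by omega)
        exact (r1.trans r2.symm).map
          (⟨fun a => .inl a, fun h => oddG_inl_inl.mpr h⟩ : EvenG k m →g OddG k m)
      refine step1.trans (Adj.reachable ?_)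
      exact oddG_inl_inr.mpr ⟨by simp; omega, rfl, rfl⟩
  intro u v
  exact (base u).trans (base v).symm

lemma ncard_le_of_range {V D : Type} [Finite V] [Finite D] (G : SimpleGraph V) (f : D → Sym2 V)
    (h : G.edgeSet ⊆ Set.range f) : G.edgeSet.ncard ≤ Nat.card D := by
  calc G.edgeSet.ncard ≤ (Set.range f).ncard := Set.ncard_le_ncard h (Set.toFinite _)
    _ = (f '' Set.univ).ncard := by rw [Set.image_univ]
    _ ≤ (Set.univ : Set D).ncard := Set.ncard_image_le (Set.toFinite _)
    _ = Nat.card D := Set.ncard_univ D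
lemma evenG_edge_bound (k m : ℕ) (hm : 3 ≤ m) :
    (EvenG k m).edgeSet.ncard ≤ k * (m+1) + (k-1) := by
  have hb : (EvenG k m).edgeSet.ncard ≤ Nat.card ((Fin k × ZMod (m+1)) ⊕ Fin (k-1)) := by
    apply ncard_le_of_range (EvenG k m)
      (fun d => Sum.rec
        (fun p => s((p.1, p.2), (p.1, p.2 + 1)))
        (fun t => s((⟨t.val, by have := t.isLt; omega⟩, (0 : ZMod (m+1))),
                    (⟨t.val + 1, by have := t.isLt; omega⟩, (0 : ZMod (m+1))))) d)
    intro e he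
    induction e using Sym2.ind with
    | _ u v =>
      rw [mem_edgeSet] at he
      obtain ⟨u1, u2⟩ := u
      obtain ⟨v1, v2⟩ := v
      rcases he with ⟨h1, -, h3 | h3⟩ | ⟨h1, h2, h3 | h3⟩
      · refine ⟨Sum.inl (u1, u2), ?_⟩
        simp only at h1
        subst h1; subst h3; rfl
      · refine ⟨Sum.inl (v1, v2), ?_⟩
        simp only at h1
        subst h1; subst h3
        exact Sym2.eq_swap
      · simp only at h1 h2 h3
        have hlt := v1.isLt
        refine ⟨Sum.inr ⟨u1.val, by omega⟩, ?_⟩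
        subst h1; subst h2
        have e1 : (⟨u1.val, by omega⟩ : Fin k) = u1 := Fin.ext rfl
        have e2 : (⟨u1.val + 1, by omega⟩ : Fin k) = v1 := Fin.ext h3
        simp only
        rw [e1, e2]
      · simp only at h1 h2 h3
        have hlt := u1.isLt
        refine ⟨Sum.inr ⟨v1.val, by omega⟩, ?_⟩
        subst h1; subst h2
        have e1 : (⟨v1.val, by omega⟩ : Fin k) = v1 := Fin.ext rfl
        have e2 : (⟨v1.val + 1, by omega⟩ : Fin k) = u1 := Fin.ext h3
        simp only
        rw [e1, e2]
        exact Sym2.eq_swap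
  calc (EvenG k m).edgeSet.ncard ≤ Nat.card ((Fin k × ZMod (m+1)) ⊕ Fin (k-1)) := hb
    _ = k * (m+1) + (k-1) := by
      simp [Nat.card_eq_fintype_card, ZMod.card]

lemma oddG_edge_bound (k m : ℕ) (hm : 3 ≤ m) :
    (OddG k m).edgeSet.ncard ≤ k * (m+1) + k + (m-1) := by
  have hm0 : 0 < m := by omega
  have hb : (OddG k m).edgeSet.ncard ≤
      Nat.card ((Fin k × ZMod (m+1)) ⊕ (Fin k ⊕ Fin (m-1))) := by
    apply ncard_le_of_range (OddG k m)
      (fun d => Sum.rec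
        (fun p => s((Sum.inl (p.1, p.2) : (Fin k × ZMod (m+1)) ⊕ Fin m),
                    Sum.inl (p.1, p.2 + 1)))
        (fun d' => Sum.rec
          (fun t => if h : t.val + 1 < k then
              s((Sum.inl (t, 0) : (Fin k × ZMod (m+1)) ⊕ Fin m), Sum.inl (⟨t.val + 1, h⟩, 0))
            else
              s((Sum.inl (t, 0) : (Fin k × ZMod (m+1)) ⊕ Fin m), Sum.inr ⟨0, hm0⟩))
          (fun t => s((Sum.inr ⟨t.val, by have := t.isLt; omega⟩ : (Fin k × ZMod (m+1)) ⊕ Fin m),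
                      Sum.inr ⟨t.val + 1, by have := t.isLt; omega⟩)) d') d)
    intro e he
    induction e using Sym2.ind with
    | _ u v =>
      rw [mem_edgeSet] at he
      rcases he with ⟨x, y, rfl, rfl, hE⟩ | ⟨p, q, rfl, rfl, hP⟩ | ⟨x, p, hor, hk1, hx2, hp0⟩
      · obtain ⟨u1, u2⟩ := x
        obtain ⟨v1, v2⟩ := y
        rcases hE with ⟨h1, -, h3 | h3⟩ | ⟨h1, h2, h3 | h3⟩
        · refine ⟨Sum.inl (u1, u2), ?_⟩
          simp only at h1
          subst h1; subst h3; rfl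
        · refine ⟨Sum.inl (v1, v2), ?_⟩
          simp only at h1
          subst h1; subst h3
          exact Sym2.eq_swap
        · simp only at h1 h2 h3
          have hlt := v1.isLt
          refine ⟨Sum.inr (Sum.inl u1), ?_⟩
          subst h1; subst h2
          simp only
          rw [dif_pos (by omega : u1.val + 1 < k)]
          have e2 : (⟨u1.val + 1, by omega⟩ : Fin k) = v1 := Fin.ext h3
          rw [e2]
        · simp only at h1 h2 h3
          have hlt := u1.isLt
          refine ⟨Sum.inr (Sum.inl v1), ?_⟩
          subst h1; subst h2
          simp only
          rw [dif_pos (by omega : v1.val + 1 < k)]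
          have e2 : (⟨v1.val + 1, by omega⟩ : Fin k) = u1 := Fin.ext h3
          rw [e2]
          exact Sym2.eq_swap
      · rw [pathGraph_adj] at hP
        rcases hP with h | h
        · have hlt := q.isLt
          refine ⟨Sum.inr (Sum.inr ⟨p.val, by omega⟩), ?_⟩
          simp only
          have e1 : (⟨p.val, by omega⟩ : Fin m) = p := Fin.ext rfl
          have e2 : (⟨p.val + 1, by omega⟩ : Fin m) = q := Fin.ext h
          rw [e1, e2]
        · have hlt := p.isLt
          refine ⟨Sum.inr (Sum.inr ⟨q.val, by omega⟩), ?_⟩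
          simp only
          have e1 : (⟨q.val, by omega⟩ : Fin m) = q := Fin.ext rfl
          have e2 : (⟨q.val + 1, by omega⟩ : Fin m) = p := Fin.ext h
          rw [e1, e2]
          exact Sym2.eq_swap
      · refine ⟨Sum.inr (Sum.inl x.1), ?_⟩
        simp only
        rw [dif_neg (by omega : ¬ x.1.val + 1 < k)]
        have e1 : (x.1, (0 : ZMod (m+1))) = x := by
          obtain ⟨x1, x2⟩ := x; simp only at hx2 ⊢; rw [hx2]
        have e2 : (⟨0, hm0⟩ : Fin m) = p := Fin.ext hp0.symm
        rw [e1, e2]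
        rcases hor with ⟨rfl, rfl⟩ | ⟨rfl, rfl⟩
        · rfl
        · exact Sym2.eq_swap
  calc (OddG k m).edgeSet.ncard ≤ _ := hb
    _ = k * (m+1) + k + (m-1) := by
      simp [Nat.card_eq_fintype_card, ZMod.card]
      ring
lemma evenG_arrows (k m : ℕ) (hm : 3 ≤ m) :
    Arrows (EvenG k m) (Matching (2*k)) (pathGraph m) := by
  intro R hR
  by_cases hstar : ∃ (i : Fin k) (c : ZMod (m+1)), ∀ x y, R.Adj (i,x) (i,y) → x = c ∨ y = c
  · obtain ⟨i, c, hc⟩ := hstar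
    right
    obtain ⟨f, hfinj, hfc, hfadj⟩ := path_in_cycle m hm c
    refine ⟨⟨fun v => (i, f v), ?_⟩, ?_⟩
    · intro u v huv
      rw [sdiff_adj]
      refine ⟨Or.inl ⟨rfl, hfadj u v huv⟩, fun hred => ?_⟩
      rcases hc _ _ hred with h | h
      · exact hfc u h
      · exact hfc v h
    · intro u v h
      exact hfinj (congrArg Prod.snd h)
  · push_neg at hstar
    left
    have hall : ∀ i : Fin k, ∃ a b c d : ZMod (m+1), R.Adj (i,a) (i,b) ∧ R.Adj (i,c) (i,d) ∧
        a ≠ b ∧ c ≠ d ∧ a ≠ c ∧ a ≠ d ∧ b ≠ c ∧ b ≠ d := by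
      intro i
      have hsub : ∀ x y, R.Adj (i,x) (i,y) → (Cyc (m+1)).Adj x y := by
        intro x y h
        rcases hR h with ⟨-, h2⟩ | ⟨-, -, h3⟩
        · exact h2
        · simp only at h3; omega
      rcases cyc_dichotomy m hm (fun x y => R.Adj (i,x) (i,y))
        (fun x y h => h.symm) hsub with h | ⟨c, hc⟩
      · exact h
      · obtain ⟨x, y, hxy, hne⟩ := hstar i c
        rcases hc x y hxy with h | h
        · exact absurd h hne.1
        · exact absurd h hne.2
    choose a b c d hab hcd n1 n2 n3 n4 n5 n6 using hall
    have hI : ∀ j : Fin (2*k), j.val / 2 < k := fun j => by have := j.isLt; omega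
    refine matching_hom R (2*k)
      (fun j => (⟨j.val / 2, hI j⟩, if j.val % 2 = 0 then a ⟨j.val / 2, hI j⟩ else c ⟨j.val / 2, hI j⟩))
      (fun j => (⟨j.val / 2, hI j⟩, if j.val % 2 = 0 then b ⟨j.val / 2, hI j⟩ else d ⟨j.val / 2, hI j⟩))
      ?_ ?_
    · intro j
      by_cases hj : j.val % 2 = 0
      · simp only [if_pos hj]; exact hab _
      · simp only [if_neg hj]; exact hcd _
    · intro j j' hne
      have hvne : j.val ≠ j'.val := fun h => hne (Fin.ext h)
      by_cases hQ : j.val / 2 = j'.val / 2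
      · have hIe : (⟨j.val / 2, hI j⟩ : Fin k) = ⟨j'.val / 2, hI j'⟩ := Fin.ext hQ
        have hpar : j.val % 2 ≠ j'.val % 2 := by omega
        set I := (⟨j.val / 2, hI j⟩ : Fin k) with hIdef
        rcases Nat.mod_two_eq_zero_or_one j.val with hj | hj <;>
          rcases Nat.mod_two_eq_zero_or_one j'.val with hj' | hj'
        · exact absurd (hj.trans hj'.symm) hpar
        · simp only [if_pos hj, if_neg (by omega : ¬ j'.val % 2 = 0), ← hIe]
          refine ⟨?_, ?_, ?_, ?_⟩ <;> intro h <;> rw [Prod.mk.injEq] at h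
          · exact n3 I h.2
          · exact n4 I h.2
          · exact n5 I h.2
          · exact n6 I h.2
        · simp only [if_neg (by omega : ¬ j.val % 2 = 0), if_pos hj', ← hIe]
          refine ⟨?_, ?_, ?_, ?_⟩ <;> intro h <;> rw [Prod.mk.injEq] at h
          · exact n3 I h.2.symm
          · exact n5 I h.2.symm
          · exact n4 I h.2.symm
          · exact n6 I h.2.symm
        · exact absurd (hj.trans hj'.symm) hpar
      · have hne1 : (⟨j.val / 2, hI j⟩ : Fin k) ≠ ⟨j'.val / 2, hI j'⟩ :=
          fun h => hQ (congrArg Fin.val h)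
        refine ⟨?_, ?_, ?_, ?_⟩ <;> exact fun h => hne1 (congrArg Prod.fst h)
lemma oddG_arrows (k m : ℕ) (hm : 3 ≤ m) :
    Arrows (OddG k m) (Matching (2*k+1)) (pathGraph m) := by
  intro R hR
  by_cases hstar : ∃ (i : Fin k) (c : ZMod (m+1)),
      ∀ x y, R.Adj (.inl (i,x)) (.inl (i,y)) → x = c ∨ y = c
  · obtain ⟨i, c, hc⟩ := hstar
    right
    obtain ⟨f, hfinj, hfc, hfadj⟩ := path_in_cycle m hm c
    refine ⟨⟨fun v => .inl (i, f v), ?_⟩, ?_⟩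
    · intro u v huv
      rw [sdiff_adj]
      refine ⟨oddG_inl_inl.mpr (Or.inl ⟨rfl, hfadj u v huv⟩), fun hred => ?_⟩
      rcases hc _ _ hred with h | h
      · exact hfc u h
      · exact hfc v h
    · intro u v h
      have h' : (Sum.inl (i, f u) : (Fin k × ZMod (m+1)) ⊕ Fin m) = Sum.inl (i, f v) := h
      exact hfinj (congrArg Prod.snd (Sum.inl_injective h'))
  · by_cases hpath : ∃ p q : Fin m, R.Adj (.inr p) (.inr q)
    · left
      obtain ⟨p, q, hpq⟩ := hpath
      push_neg at hstar
      have hall : ∀ i : Fin k, ∃ a b c d : ZMod (m+1),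
          R.Adj (.inl (i,a)) (.inl (i,b)) ∧ R.Adj (.inl (i,c)) (.inl (i,d)) ∧
          a ≠ b ∧ c ≠ d ∧ a ≠ c ∧ a ≠ d ∧ b ≠ c ∧ b ≠ d := by
        intro i
        have hsub : ∀ x y, R.Adj (.inl (i,x)) (.inl (i,y)) → (Cyc (m+1)).Adj x y := by
          intro x y h
          rcases oddG_inl_inl.mp (hR h) with ⟨-, h2⟩ | ⟨-, -, h3⟩
          · exact h2
          · simp only at h3; omega
        rcases cyc_dichotomy m hm (fun x y => R.Adj (.inl (i,x)) (.inl (i,y)))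
          (fun x y h => h.symm) hsub with h | ⟨c, hc⟩
        · exact h
        · obtain ⟨x, y, hxy, hne⟩ := hstar i c
          rcases hc x y hxy with h | h
          · exact absurd h hne.1
          · exact absurd h hne.2
      choose a b c d hab hcd n1 n2 n3 n4 n5 n6 using hall
      refine matching_hom R (2*k+1)
        (fun j => if h : j.val < 2*k then
            .inl (⟨j.val / 2, by omega⟩,
              if j.val % 2 = 0 then a ⟨j.val / 2, by omega⟩ else c ⟨j.val / 2, by omega⟩)
          else .inr p)
        (fun j => if h : j.val < 2*k then
            .inl (⟨j.val / 2, by omega⟩,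
              if j.val % 2 = 0 then b ⟨j.val / 2, by omega⟩ else d ⟨j.val / 2, by omega⟩)
          else .inr q) ?_ ?_
      · intro j
        by_cases h : j.val < 2*k
        · simp only [dif_pos h]
          by_cases hj : j.val % 2 = 0
          · simp only [if_pos hj]; exact hab _
          · simp only [if_neg hj]; exact hcd _
        · simp only [dif_neg h]; exact hpq
      · intro j j' hne
        have hvne : j.val ≠ j'.val := fun h => hne (Fin.ext h)
        by_cases h : j.val < 2*k <;> by_cases h' : j'.val < 2*k
        · simp only [dif_pos h, dif_pos h']
          by_cases hQ : j.val / 2 = j'.val / 2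
          · have hIe : (⟨j.val / 2, by omega⟩ : Fin k) = ⟨j'.val / 2, by omega⟩ := Fin.ext hQ
            have hpar : j.val % 2 ≠ j'.val % 2 := by omega
            rcases Nat.mod_two_eq_zero_or_one j.val with hj | hj <;>
              rcases Nat.mod_two_eq_zero_or_one j'.val with hj' | hj'
            · exact absurd (hj.trans hj'.symm) hpar
            · simp only [if_pos hj, if_neg (by omega : ¬ j'.val % 2 = 0), ← hIe]
              refine ⟨?_, ?_, ?_, ?_⟩ <;> intro hEq <;>
                (have hEq2 := Sum.inl_injective hEq; rw [Prod.mk.injEq] at hEq2)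
              · exact n3 _ hEq2.2
              · exact n4 _ hEq2.2
              · exact n5 _ hEq2.2
              · exact n6 _ hEq2.2
            · simp only [if_neg (by omega : ¬ j.val % 2 = 0), if_pos hj', ← hIe]
              refine ⟨?_, ?_, ?_, ?_⟩ <;> intro hEq <;>
                (have hEq2 := Sum.inl_injective hEq; rw [Prod.mk.injEq] at hEq2)
              · exact n3 _ hEq2.2.symm
              · exact n5 _ hEq2.2.symm
              · exact n4 _ hEq2.2.symm
              · exact n6 _ hEq2.2.symm
            · exact absurd (hj.trans hj'.symm) hpar
          · have hne1 : (⟨j.val / 2, by omega⟩ : Fin k) ≠ ⟨j'.val / 2, by omega⟩ :=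
              fun hEq => hQ (congrArg Fin.val hEq)
            refine ⟨?_, ?_, ?_, ?_⟩ <;>
              exact fun hEq => hne1 (congrArg Prod.fst (Sum.inl_injective hEq))
        · simp only [dif_pos h, dif_neg h']
          refine ⟨?_, ?_, ?_, ?_⟩ <;> exact fun hEq => Sum.inl_ne_inr hEq
        · simp only [dif_neg h, dif_pos h']
          refine ⟨?_, ?_, ?_, ?_⟩ <;> exact fun hEq => Sum.inr_ne_inl hEq
        · have := j.isLt
          have := j'.isLt
          omega
    · right
      refine ⟨⟨fun v => .inr v, ?_⟩, ?_⟩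
      · intro u v huv
        rw [sdiff_adj]
        exact ⟨oddG_inr_inr.mpr huv, fun hred => hpath ⟨u, v, hred⟩⟩
      · intro u v h
        exact Sum.inr_injective h
/-- For all integers `n ≥ 1` and `m ≥ 3`, the connected size Ramsey number
`r̂_c(nK₂, Pₘ)` is at most `n(m+2)/2 − 1` if `n` is even, and at most `(n+1)(m+2)/2 − 3` if `n`
is odd. -/
theorem connected_size_ramsey_matching_path_upper (n m : ℕ) (hn : 1 ≤ n) (hm : 3 ≤ m) :
    ∃ (V : Type) (G : SimpleGraph V), Finite V ∧ G.Connected ∧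
      Arrows G (Matching n) (pathGraph m) ∧
      G.edgeSet.ncard ≤
        if Even n then n * (m + 2) / 2 - 1 else (n + 1) * (m + 2) / 2 - 3 := by
  rcases Nat.even_or_odd n with he | ho
  · obtain ⟨r, hr⟩ := he
    have hk : 1 ≤ r := by omega
    have hrn : n = 2 * r := by omega
    subst hrn
    refine ⟨Fin r × ZMod (m+1), EvenG r m, inferInstance, evenG_connected r m hk hm,
      evenG_arrows r m hm, ?_⟩
    rw [if_pos (even_two_mul r)]
    have h1 : 2 * r * (m + 2) = 2 * (r * (m + 2)) := by ring
    rw [h1, Nat.mul_div_cancel_left _ (by norm_num : 0 < 2)]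
    have h2 : r * (m + 2) = r * (m + 1) + r := by ring
    have := evenG_edge_bound r m hm
    omega
  · obtain ⟨r, hr⟩ := ho
    subst hr
    refine ⟨(Fin r × ZMod (m+1)) ⊕ Fin m, OddG r m, inferInstance, oddG_connected r m hm,
      oddG_arrows r m hm, ?_⟩
    rw [if_neg (by rw [Nat.even_iff]; omega)]
    have h1 : (2 * r + 1 + 1) * (m + 2) = 2 * ((r + 1) * (m + 2)) := by ring
    rw [h1, Nat.mul_div_cancel_left _ (by norm_num : 0 < 2)]
    have h2 : (r + 1) * (m + 2) = r * (m + 1) + r + m + 2 := by ring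
    have := oddG_edge_bound r m hm
    omega
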